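/- Let (Φ, Ψ) be a continuous K-bi-g-frame for H, where K ∈ B(H), and let T ∈ B(H) with range(T) ⊆ range(K). Then (Φ, Ψ) is a continuous T-bi-g-frame for H; in particular, if α > 0 satisfies T T* ≤ α² K K* and A, B are bounds for the K-bi-g-frame, then (A/α²)‖T* f‖² ≤ ∫_Ω ⟨Φ_ω f, Ψ_ω f⟩ dμ(ω) ≤ B‖f‖² for all f ∈ H. -/

import Mathlib

open MeasureTheory ContinuousLinearMap Filter
open scoped ComplexOrder Topology

noncomputable section

variable {Ω : Type*} [MeasurableSpace Ω] {H : Type*}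
  [NormedAddCommGroup H] [InnerProductSpace ℂ H] [CompleteSpace H]
  {G : Ω → Type*} [∀ ω, NormedAddCommGroup (G ω)]
  [∀ ω, InnerProductSpace ℂ (G ω)] [∀ ω, CompleteSpace (G ω)]

private theorem my_douglas (K T : H →L[ℂ] H) (hrange : Set.range ⇑T ⊆ Set.range ⇑K) :
    ∃ α : ℝ, 1 ≤ α ∧ ∀ f : H, ‖adjoint T f‖ ≤ α * ‖adjoint K f‖ := by
  classical
  set V := (K.ker)ᗮ with hV
  haveI : CompleteSpace (K.ker) := (ContinuousLinearMap.isClosed_ker K).completeSpace_coe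
  haveI : CompleteSpace V := (Submodule.isClosed_orthogonal _).completeSpace_coe
  have huniq : ∀ v w : V, K v = K w → v = w := by
    intro v w h
    have hmem : (v : H) - w ∈ K.ker := by
      simp [LinearMap.mem_ker, map_sub, h]
    have hmem2 : (v : H) - w ∈ V := sub_mem v.2 w.2
    have h0 : (v : H) - w = 0 := by
      have := (Submodule.orthogonal_disjoint (K.ker)).le_bot
        (Submodule.mem_inf.mpr ⟨hmem, hmem2⟩)
      simpa using this
    exact Subtype.ext (sub_eq_zero.mp h0)
  have hex : ∀ x : H, ∃ v : V, K v = T x := by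
    intro x
    obtain ⟨y, hy⟩ := hrange ⟨x, rfl⟩
    refine ⟨V.orthogonalProjectionOnto y, ?_⟩
    have hmem : y - V.orthogonalProjectionOnto y ∈ Vᗮ :=
      V.sub_starProjection_mem_orthogonal y
    have hmem' : y - V.orthogonalProjectionOnto y ∈ K.ker := by
      simpa [hV, Submodule.orthogonal_orthogonal] using hmem
    have h0 : K (y - V.orthogonalProjectionOnto y) = 0 := hmem'
    rw [map_sub, sub_eq_zero] at h0
    rw [← h0, hy]
  choose S hS using hex
  have Sadd : ∀ x y, S (x + y) = S x + S y := by
    intro x y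
    apply huniq
    simp [hS, map_add]
  have Ssmul : ∀ (c : ℂ) (x : H), S (c • x) = c • S x := by
    intro c x
    apply huniq
    simp [hS, _root_.map_smul]
  let Slin : H →ₗ[ℂ] V := ⟨⟨S, Sadd⟩, Ssmul⟩
  have hcont : Continuous Slin := by
    apply Slin.continuous_of_seq_closed_graph
    intro u x y hu hSu
    apply huniq
    have h1 : Tendsto (fun n => K ((Slin (u n) : H))) atTop (𝓝 (K y)) :=
      (K.continuous.comp continuous_subtype_val).continuousAt.tendsto.comp hSu
    have h2 : Tendsto (fun n => K ((Slin (u n) : H))) atTop (𝓝 (T x)) := by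
      have : (fun n => K ((Slin (u n) : H))) = fun n => T (u n) := by
        ext n; exact hS (u n)
      rw [this]
      exact T.continuous.continuousAt.tendsto.comp hu
    have := tendsto_nhds_unique h1 h2
    rw [this]
    exact (hS x).symm
  let S' : H →L[ℂ] H := V.subtypeL.comp ⟨Slin, hcont⟩
  have hTKS : T = K.comp S' := by
    ext x
    exact (hS x).symm
  refine ⟨max ‖adjoint S'‖ 1, le_max_right _ _, fun f => ?_⟩
  have : adjoint T = (adjoint S').comp (adjoint K) := by
    rw [hTKS, adjoint_comp]
  rw [this]
  calc ‖(adjoint S').comp (adjoint K) f‖ ≤ ‖adjoint S'‖ * ‖adjoint K f‖ :=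
        (adjoint S').le_opNorm _
    _ ≤ max ‖adjoint S'‖ 1 * ‖adjoint K f‖ :=
        mul_le_mul_of_nonneg_right (le_max_left _ _) (norm_nonneg _)

/-- `(Φ, Ψ)` is a continuous `K`-bi-`g`-frame for `H` with bounds `A`, `B`. -/
def IsContKBiGFrame (μ : Measure Ω) (K : H →L[ℂ] H) (Φ Ψ : ∀ ω, H →L[ℂ] G ω)
    (A B : ℝ) : Prop :=
  ∀ f : H,
    Integrable (fun ω => (inner ℂ (Φ ω f) (Ψ ω f) : ℂ)) μ ∧
    ((A * ‖adjoint K f‖ ^ 2 : ℝ) : ℂ) ≤ ∫ ω, (inner ℂ (Φ ω f) (Ψ ω f) : ℂ) ∂μ ∧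
    ∫ ω, (inner ℂ (Φ ω f) (Ψ ω f) : ℂ) ∂μ ≤ ((B * ‖f‖ ^ 2 : ℝ) : ℂ)

/-- let `(Φ, Ψ)` be a continuous `K`-bi-`g`-frame with bounds `A, B`, and let
`T ∈ B(H)` with `range(T) ⊆ range(K)`.  Then `(Φ, Ψ)` is a continuous `T`-bi-`g`-frame; in
particular, whenever `α > 0` satisfies `T T* ≤ α² K K*` (i.e. `‖T* f‖² ≤ α²‖K* f‖²` for all
`f`), the pair `(Φ, Ψ)` is a continuous `T`-bi-`g`-frame with bounds `A/α²` and `B`. -/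
theorem isContKBiGFrame_of_range_subset (μ : Measure Ω) (K T : H →L[ℂ] H)
    (Φ Ψ : ∀ ω, H →L[ℂ] G ω) (A B : ℝ) (hA : 0 < A) (hAB : A ≤ B)
    (hframe : IsContKBiGFrame μ K Φ Ψ A B)
    (hrange : Set.range ⇑T ⊆ Set.range ⇑K) :
    (∃ A' B' : ℝ, 0 < A' ∧ A' ≤ B' ∧ IsContKBiGFrame μ T Φ Ψ A' B') ∧
    ∀ α : ℝ, 0 < α → (∀ f : H, ‖adjoint T f‖ ^ 2 ≤ α ^ 2 * ‖adjoint K f‖ ^ 2) →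
      IsContKBiGFrame μ T Φ Ψ (A / α ^ 2) B := by
  have key : ∀ α : ℝ, 0 < α → (∀ f : H, ‖adjoint T f‖ ^ 2 ≤ α ^ 2 * ‖adjoint K f‖ ^ 2) →
      IsContKBiGFrame μ T Φ Ψ (A / α ^ 2) B := by
    intro α hα hαf f
    obtain ⟨hint, hlow, hup⟩ := hframe f
    refine ⟨hint, ?_, hup⟩
    refine le_trans ?_ hlow
    rw [Complex.real_le_real]
    have h1 : A / α ^ 2 * ‖adjoint T f‖ ^ 2 ≤ A / α ^ 2 * (α ^ 2 * ‖adjoint K f‖ ^ 2) :=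
      mul_le_mul_of_nonneg_left (hαf f) (by positivity)
    have h2 : A / α ^ 2 * (α ^ 2 * ‖adjoint K f‖ ^ 2) = A * ‖adjoint K f‖ ^ 2 := by
      field_simp
    linarith
  refine ⟨?_, key⟩
  obtain ⟨α, hα1, hαf⟩ := my_douglas K T hrange
  have hα : 0 < α := lt_of_lt_of_le one_pos hα1
  refine ⟨A / α ^ 2, B, by positivity, ?_, key α hα fun f => ?_⟩
  · have : A / α ^ 2 ≤ A := div_le_self hA.le (by nlinarith)
    linarith
  · have := hαf f
    nlinarith [norm_nonneg (adjoint K f), norm_nonneg (adjoint T f)]
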